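/- The Wronskian is equivariant under inversion: let p_1, …, p_k ∈ P_n be polynomials of degree ≤ n, ℓ = n + 1 − k, and define p̂_i(ẑ) = ẑ^n p_i(−1/ẑ) (a polynomial of degree ≤ n). Then, as polynomials in ẑ, W(p̂_1, …, p̂_k)(ẑ) = ẑ^{kℓ} W(p_1, …, p_k)(−1/ẑ). -/

import Mathlib

open Polynomial Finset

/-- The Wronskian `W(p_1, …, p_k) = det(p_i^{(j−1)})_{1≤i,j≤k}`. -/
noncomputable def wronskian' (k : ℕ) (p : Fin k → Polynomial ℂ) : Polynomial ℂ :=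
  Matrix.det (Matrix.of fun i j : Fin k =>
    (fun q : Polynomial ℂ => Polynomial.derivative q)^[(j : ℕ)] (p i))

/-- The inversion action on `P_n`: `p(z) ↦ ẑ^n p(−1/ẑ) = ∑_j (−1)^j p_j ẑ^{n−j}`. -/
noncomputable def invAct (n : ℕ) (p : Polynomial ℂ) : Polynomial ℂ :=
  ∑ j ∈ Finset.range (n + 1), C ((-1 : ℂ) ^ j * p.coeff j) * X ^ (n - j)

/-- invAct as a linear map -/
noncomputable def invActL (n : ℕ) : Polynomial ℂ →ₗ[ℂ] Polynomial ℂ where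
  toFun p := invAct n p
  map_add' p q := by simp [invAct, mul_add, add_mul, Finset.sum_add_distrib]
  map_smul' c p := by
    simp only [invAct, coeff_smul, smul_eq_mul, RingHom.id_apply, Finset.smul_sum,
      smul_eq_C_mul, coeff_C_mul, map_mul]
    exact Finset.sum_congr rfl fun j _ => by ring

noncomputable def rowL (k : ℕ) : Polynomial ℂ →ₗ[ℂ] (Fin k → Polynomial ℂ) :=
  LinearMap.pi (fun j : Fin k =>
    (Polynomial.derivative : Polynomial ℂ →ₗ[ℂ] Polynomial ℂ) ^ (j : ℕ))

noncomputable def wronM (k : ℕ) :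
    MultilinearMap ℂ (fun _ : Fin k => Polynomial ℂ) (Polynomial ℂ) :=
  (((Matrix.detRowAlternating :
      (Fin k → Polynomial ℂ) [⋀^Fin k]→ₗ[Polynomial ℂ] Polynomial ℂ)).toMultilinearMap.restrictScalars
      ℂ).compLinearMap (fun _ => rowL k)

theorem wronM_apply (k : ℕ) (p : Fin k → Polynomial ℂ) :
    wronM k p = wronskian' k p := by
  have h : wronskian' k p = Matrix.detRowAlternating
      (Matrix.of fun i j : Fin k => (fun q : Polynomial ℂ => derivative q)^[(j : ℕ)] (p i)) := rfl
  rw [h]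
  simp only [wronM, MultilinearMap.compLinearMap_apply, MultilinearMap.coe_restrictScalars,
    AlternatingMap.coe_multilinearMap]
  congr 1
  funext i j
  simp [rowL, Module.End.pow_apply, Matrix.of_apply]

theorem sum_finset_ge (k : ℕ) : ∀ (s : Finset ℕ), k ≤ s.card →
    ∑ i ∈ range k, i ≤ ∑ m ∈ s, m := by
  induction k with
  | zero => simp
  | succ k ih =>
    intro s hs
    have hne : s.Nonempty := Finset.card_pos.mp (by omega)
    set M := s.max' hne with hM
    have hMem : M ∈ s := s.max'_mem hne
    have hsub : s ⊆ Finset.range (M + 1) := by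
      intro x hx
      simp only [Finset.mem_range]
      exact Nat.lt_succ_of_le (s.le_max' x hx)
    have hcard : s.card ≤ M + 1 := by
      simpa using Finset.card_le_card hsub
    have hk : k ≤ M := by omega
    have herase : k ≤ (s.erase M).card := by
      rw [Finset.card_erase_of_mem hMem]; omega
    have := ih (s.erase M) herase
    rw [Finset.sum_range_succ, ← Finset.sum_erase_add s _ hMem]
    omega

theorem sum_inj_ge {k : ℕ} {b : Fin k → ℕ} (hb : Function.Injective b) :
    ∑ i ∈ range k, i ≤ ∑ i, b i := by
  have h : ∑ m ∈ Finset.image b Finset.univ, id m = ∑ i, id (b i) :=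
    Finset.sum_image (fun x _ y _ h => hb h)
  simp only [id] at h
  have h2 : ∑ i ∈ range k, i ≤ ∑ m ∈ Finset.image b Finset.univ, m := by
    apply sum_finset_ge
    rw [Finset.card_image_of_injective _ hb, Finset.card_univ, Fintype.card_fin]
  exact le_of_le_of_eq h2 h

theorem card_Ioi_sum (k : ℕ) : ∑ i : Fin k, (Finset.Ioi i).card = ∑ i ∈ range k, i := by
  simp only [Fin.card_Ioi]
  rw [Fin.sum_univ_eq_sum_range (fun i => k - 1 - i)]
  exact Finset.sum_range_reflect id k

theorem wronskian'_X_pow (k : ℕ) (b : Fin k → ℕ) :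
    wronskian' k (fun i => (X : Polynomial ℂ) ^ (b i)) =
      C (Matrix.det (Matrix.vandermonde (fun i => ((b i : ℂ))))) *
        X ^ (∑ i, b i - k * (k - 1) / 2) := by
  set V := Matrix.det (Matrix.vandermonde (fun i : Fin k => ((b i : ℂ)))) with hV
  apply Polynomial.eq_of_infinite_eval_eq
  refine Set.Infinite.mono ?_ ((Set.finite_singleton (0:ℂ)).infinite_compl)
  intro z hz
  simp only [Set.mem_compl_iff, Set.mem_singleton_iff] at hz
  simp only [Set.mem_setOf_eq]
  -- compute the determinant of descFactorials
  have hdet : Matrix.det (Matrix.of fun i j : Fin k => (((b i).descFactorial (j:ℕ) : ℂ))) = V := by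
    have h1 : (Matrix.of fun i j : Fin k => (((b i).descFactorial (j:ℕ) : ℂ))) =
        Matrix.of fun i j : Fin k => (descPochhammer ℂ (j:ℕ)).eval ((b i : ℂ)) := by
      ext i j
      simp [descPochhammer_eval_eq_descFactorial]
    rw [h1, hV]
    exact (Matrix.det_eval_matrixOfPolynomials_eq_det_vandermonde _ _
      (fun j => descPochhammer_natDegree ℂ (j:ℕ))
      (fun j => monic_descPochhammer ℂ (j:ℕ))).symm
  -- entry evaluation
  have hent : ∀ i j : Fin k, eval z ((fun q : Polynomial ℂ => derivative q)^[(j:ℕ)] (X ^ (b i))) =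
      z ^ (b i) * ((z⁻¹) ^ (j:ℕ) * ((b i).descFactorial (j:ℕ) : ℂ)) := by
    intro i j
    rw [show (fun q : Polynomial ℂ => derivative q) = ⇑(derivative (R := ℂ)) from rfl,
      Polynomial.iterate_derivative_X_pow_eq_smul]
    rcases le_or_gt (j:ℕ) (b i) with h | h
    · rw [eval_smul, smul_eq_mul, eval_pow, eval_X, pow_sub₀ z hz h, inv_pow]
      ring
    · rw [Nat.descFactorial_eq_zero_iff_lt.mpr h]
      simp
  -- eval of the wronskian
  have hlhs : eval z (wronskian' k (fun i => (X : Polynomial ℂ) ^ (b i))) =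
      (∏ i, z ^ (b i)) * (((z⁻¹) ^ (k * (k - 1) / 2)) * V) := by
    have := RingHom.map_det (Polynomial.evalRingHom z)
      (Matrix.of fun i j : Fin k => (fun q : Polynomial ℂ => derivative q)^[(j:ℕ)] (X ^ (b i)))
    rw [wronskian']
    rw [show (Polynomial.evalRingHom z) ((Matrix.of fun i j : Fin k =>
        (fun q : Polynomial ℂ => derivative q)^[(j:ℕ)] (X ^ (b i))).det) =
        eval z ((Matrix.of fun i j : Fin k =>
        (fun q : Polynomial ℂ => derivative q)^[(j:ℕ)] (X ^ (b i))).det) from rfl] at this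
    rw [this]
    have hmap : (Matrix.of fun i j : Fin k =>
        (fun q : Polynomial ℂ => derivative q)^[(j:ℕ)] (X ^ (b i))).map (Polynomial.evalRingHom z) =
        Matrix.of fun i j : Fin k =>
          z ^ (b i) * ((z⁻¹) ^ (j:ℕ) * ((b i).descFactorial (j:ℕ) : ℂ)) := by
      ext i j
      simp only [Matrix.map_apply, Matrix.of_apply, coe_evalRingHom]
      exact hent i j
    rw [RingHom.mapMatrix_apply, hmap, Matrix.det_mul_column (fun i => z ^ (b i))
      (fun i j : Fin k => (z⁻¹) ^ (j:ℕ) * (((b i).descFactorial (j:ℕ) : ℂ)))]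
    rw [show (fun i j : Fin k => (z⁻¹) ^ (j:ℕ) * (((b i).descFactorial (j:ℕ) : ℂ))) =
      Matrix.of (fun i j : Fin k => (z⁻¹) ^ (j:ℕ) * (((b i).descFactorial (j:ℕ) : ℂ))) from rfl]
    rw [Matrix.det_mul_row (fun j : Fin k => (z⁻¹) ^ (j:ℕ))
      (fun i j : Fin k => (((b i).descFactorial (j:ℕ) : ℂ)))]
    rw [show Matrix.det (fun i j : Fin k => (((b i).descFactorial (j:ℕ) : ℂ))) =
      Matrix.det (Matrix.of fun i j : Fin k => (((b i).descFactorial (j:ℕ) : ℂ))) from rfl, hdet]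
    congr 2
    have h1 : ∏ j : Fin k, (z⁻¹) ^ (j:ℕ) = (z⁻¹) ^ (∑ j : Fin k, (j:ℕ)) :=
      Finset.prod_pow_eq_pow_sum _ _ _
    rw [h1]
    congr 1
    rw [Fin.sum_univ_eq_sum_range (fun i => i) k, Finset.sum_range_id]
  -- now compare
  rw [hlhs, eval_mul, eval_C, eval_pow, eval_X]
  by_cases hVz : V = 0
  · simp [hVz]
  · have hinj : Function.Injective fun i => ((b i : ℂ)) :=
      Matrix.det_vandermonde_ne_zero_iff.mp hVz
    have hbinj : Function.Injective b := fun i j h => hinj (by simp [h])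
    have hK : k * (k - 1) / 2 ≤ ∑ i, b i := by
      have := sum_inj_ge hbinj
      rwa [Finset.sum_range_id] at this
    rw [Finset.prod_pow_eq_pow_sum, pow_sub₀ z hz hK, inv_pow]
    ring

theorem invAct_C_mul_X_pow (m : ℕ) (c : ℂ) {d : ℕ} (hd : d ≤ m) :
    invAct m (C c * X ^ d) = ((-1:ℂ) ^ d * c) • (X:Polynomial ℂ) ^ (m - d) := by
  rw [invAct, Finset.sum_eq_single d]
  · simp [coeff_C_mul, coeff_X_pow, smul_eq_C_mul]
  · intro j _ hne
    rw [coeff_C_mul, coeff_X_pow, if_neg hne]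
    simp
  · intro h; exact absurd (Finset.mem_range.mpr (by omega)) h

theorem invAct_X_pow (n : ℕ) {a : ℕ} (ha : a ≤ n) :
    invAct n ((X:Polynomial ℂ) ^ a) = ((-1:ℂ) ^ a) • (X:Polynomial ℂ) ^ (n - a) := by
  have h := invAct_C_mul_X_pow n 1 ha
  rw [map_one, one_mul, mul_one] at h
  exact h

theorem invAct_zero_eq (m : ℕ) : invAct m 0 = 0 := by simp [invAct]

theorem wronskian'_smul (k : ℕ) (c : Fin k → ℂ) (q : Fin k → Polynomial ℂ) :
    wronskian' k (fun i => c i • q i) = (∏ i, c i) • wronskian' k q := by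
  rw [← wronM_apply, ← wronM_apply]
  exact (wronM k).map_smul_univ c q

theorem kk_fact (k : ℕ) : k * (k - 1) / 2 * 2 = k * (k - 1) := by
  have := Finset.sum_range_id_mul_two k
  rw [Finset.sum_range_id] at this
  exact this

theorem lemmaA (k n : ℕ) (hk : k ≤ n + 1) (a : Fin k → ℕ) (ha : ∀ i, a i ≤ n) :
    wronskian' k (fun i => invAct n ((X:Polynomial ℂ) ^ (a i))) =
      invAct (k * (n + 1 - k)) (wronskian' k fun i => (X:Polynomial ℂ) ^ (a i)) := by
  by_cases hinj : Function.Injective a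
  · -- injective case
    set K := k * (k - 1) / 2 with hKdef
    set S := ∑ i, a i with hSdef
    set B := ∑ i, (n - a i) with hBdef
    have hKS : K ≤ S := by
      have := sum_inj_ge hinj
      rwa [Finset.sum_range_id] at this
    have hbinj : Function.Injective fun i => n - a i := by
      intro i j h
      have h1 := ha i; have h2 := ha j
      simp only at h
      exact hinj (by omega)
    have hKB : K ≤ B := by
      have := sum_inj_ge hbinj
      rwa [Finset.sum_range_id] at this
    have hBS : B + S = k * n := by
      rw [hBdef, hSdef, ← Finset.sum_add_distrib]
      have : ∀ i : Fin k, (n - a i) + a i = n := fun i => Nat.sub_add_cancel (ha i)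
      simp only [this]
      simp [Finset.card_univ, mul_comm]
    have hm : k * (n + 1 - k) + k * k = k * n + k := by
      have h1 : k * ((n + 1 - k) + k) = k * (n + 1) := by rw [Nat.sub_add_cancel hk]
      have h2 : k * ((n + 1 - k) + k) = k * (n + 1 - k) + k * k := by ring
      have h3 : k * (n + 1) = k * n + k := by ring
      omega
    have h2K : K * 2 = k * (k - 1) := kk_fact k
    have hkk : k * (k - 1) + k = k * k := by
      cases k with
      | zero => simp
      | succ m => simp only [Nat.succ_sub_one]; ring
    have hdm : S - K ≤ k * (n + 1 - k) := by omega
    -- vandermonde sign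
    have hVb : Matrix.det (Matrix.vandermonde fun i => (((n - a i : ℕ) : ℂ))) =
        (-1:ℂ) ^ K * Matrix.det (Matrix.vandermonde fun i => ((a i : ℂ))) := by
      rw [Matrix.det_vandermonde, Matrix.det_vandermonde]
      have hfac : ∀ i j : Fin k, ((n - a j : ℕ) : ℂ) - ((n - a i : ℕ) : ℂ) =
          (-1) * (((a j : ℂ)) - ((a i : ℂ))) := by
        intro i j
        rw [Nat.cast_sub (ha j), Nat.cast_sub (ha i)]
        ring
      calc ∏ i : Fin k, ∏ j ∈ Ioi i, (((n - a j : ℕ) : ℂ) - ((n - a i : ℕ) : ℂ))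
          = ∏ i : Fin k, ∏ j ∈ Ioi i, ((-1) * (((a j : ℂ)) - ((a i : ℂ)))) := by
            exact Finset.prod_congr rfl fun i _ => Finset.prod_congr rfl fun j _ => hfac i j
        _ = ∏ i : Fin k, (((-1:ℂ) ^ (Ioi i).card) * ∏ j ∈ Ioi i, (((a j : ℂ)) - ((a i : ℂ)))) := by
            exact Finset.prod_congr rfl fun i _ => by
              rw [Finset.prod_mul_distrib, Finset.prod_const]
        _ = (∏ i : Fin k, (-1:ℂ) ^ (Ioi i).card) *
              ∏ i : Fin k, ∏ j ∈ Ioi i, (((a j : ℂ)) - ((a i : ℂ))) := Finset.prod_mul_distrib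
        _ = (-1:ℂ) ^ K * ∏ i : Fin k, ∏ j ∈ Ioi i, (((a j : ℂ)) - ((a i : ℂ))) := by
            rw [Finset.prod_pow_eq_pow_sum, card_Ioi_sum, Finset.sum_range_id]
    -- rewrite LHS
    have h1 : (fun i => invAct n ((X:Polynomial ℂ) ^ (a i))) =
        fun i => ((-1:ℂ) ^ (a i)) • (X:Polynomial ℂ) ^ (n - a i) :=
      funext fun i => invAct_X_pow n (ha i)
    rw [h1, wronskian'_smul, wronskian'_X_pow, wronskian'_X_pow, invAct_C_mul_X_pow _ _ hdm]
    rw [smul_eq_C_mul, smul_eq_C_mul, hVb]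
    rw [Finset.prod_pow_eq_pow_sum]
    have hsgn : (-1:ℂ) ^ (S - K) = (-1:ℂ) ^ S * (-1:ℂ) ^ K := by
      have h : S - K + 2 * K = S + K := by omega
      calc (-1:ℂ) ^ (S - K) = (-1:ℂ) ^ (S - K) * ((-1:ℂ) ^ (2 * K)) := by
            rw [pow_mul]; norm_num
        _ = (-1:ℂ) ^ (S - K + 2 * K) := (pow_add _ _ _).symm
        _ = (-1:ℂ) ^ (S + K) := by rw [h]
        _ = (-1:ℂ) ^ S * (-1:ℂ) ^ K := pow_add _ _ _
    have hexp : B - K = k * (n + 1 - k) - (S - K) := by omega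
    rw [hexp, hsgn]
    rw [map_mul, map_mul, map_mul]
    ring
  · -- non-injective case
    rw [Function.not_injective_iff] at hinj
    obtain ⟨i, j, hij, hne⟩ := hinj
    have h0 : wronskian' k (fun i => invAct n ((X:Polynomial ℂ) ^ (a i))) = 0 := by
      apply Matrix.det_zero_of_row_eq hne
      funext t
      simp only [Matrix.of_apply]
      rw [hij]
    have h0' : wronskian' k (fun i => (X:Polynomial ℂ) ^ (a i)) = 0 := by
      apply Matrix.det_zero_of_row_eq hne
      funext t
      simp only [Matrix.of_apply]
      rw [hij]
    rw [h0, h0', invAct_zero_eq]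


/-- inversion equivariance of the Wronskian: for `p_1, …, p_k ∈ P_n`,
`ℓ = n + 1 − k`, and `p̂_i(ẑ) = ẑ^n p_i(−1/ẑ)`, one has, as polynomials in `ẑ`,
`W(p̂_1, …, p̂_k)(ẑ) = ẑ^{kℓ} W(p_1, …, p_k)(−1/ẑ)`; the right-hand side is the
inversion action at level `kℓ` applied to `W(p_1, …, p_k) ∈ P_{kℓ}`. -/
theorem wronskian_inversion_equivariant (k n : ℕ) (hk : k ≤ n + 1)
    (p : Fin k → Polynomial ℂ) (hdeg : ∀ i, (p i).natDegree ≤ n) :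
    wronskian' k (fun i => invAct n (p i)) =
      invAct (k * (n + 1 - k)) (wronskian' k p) := by
  classical
  set m := k * (n + 1 - k) with hm
  let F : MultilinearMap ℂ (fun _ : Fin k => Polynomial ℂ) (Polynomial ℂ) :=
    (wronM k).compLinearMap (fun _ => invActL n)
  let G : MultilinearMap ℂ (fun _ : Fin k => Polynomial ℂ) (Polynomial ℂ) :=
    (invActL m).compMultilinearMap (wronM k)
  have hF : ∀ q : Fin k → Polynomial ℂ, F q = wronskian' k (fun i => invAct n (q i)) := by
    intro q
    show wronM k (fun i => invActL n (q i)) = _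
    rw [wronM_apply]
    rfl
  have hG : ∀ q : Fin k → Polynomial ℂ, G q = invAct m (wronskian' k q) := by
    intro q
    show invActL m (wronM k q) = _
    rw [wronM_apply]
    rfl
  have hexp : p = fun i => ∑ a ∈ Finset.range (n + 1), (p i).coeff a • (X : Polynomial ℂ) ^ a := by
    funext i
    conv_lhs => rw [Polynomial.as_sum_range' (p i) (n + 1) (Nat.lt_succ_of_le (hdeg i))]
    exact Finset.sum_congr rfl fun a _ => (Polynomial.smul_X_eq_monomial).symm
  rw [← hF, ← hG, hexp]
  rw [F.map_sum_finset (fun i a => (p i).coeff a • (X : Polynomial ℂ) ^ a)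
    (fun _ => Finset.range (n + 1))]
  rw [G.map_sum_finset (fun i a => (p i).coeff a • (X : Polynomial ℂ) ^ a)
    (fun _ => Finset.range (n + 1))]
  apply Finset.sum_congr rfl
  intro r hr
  rw [F.map_smul_univ, G.map_smul_univ]
  congr 1
  rw [hF, hG]
  exact lemmaA k n hk r fun i => by
    have := (Fintype.mem_piFinset.mp hr) i
    simpa [Nat.lt_succ_iff] using this
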